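/- arXiv:1303.3556 — 2 statements merged into one kernel-verified Lean document; each statement's English description precedes it below -/
import Mathlib

section
/- If a : ℕ → ℝ is an arithmetic function, S(x) = Σ_{n≤x} a(n), and there exist constants c > 0, C > 0 and X₀ such that for every X ≥ X₀ there exist x₁, x₂ ∈ [X, X + C·X^{3/4}] with S(x₁) > c·X^{3/8} and S(x₂) < -c·X^{3/8}, and moreover |a(n)| ≤ d₄(n) for all n, then for every ε > 0 there is an absolute constant c' such that for all sufficiently large x, the number of n in (x, x + 3C·x^{3/4}] with a(n) > 0 is ≫_ε x^{3/8-ε}, and likewise the number of n in this interval with a(n) < 0 is ≫_ε x^{3/8-ε}. -/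
open Finset

/-- `d₄ n`: number of quadruples `(a,b,c,d)` of positive integers with `a*b*c*d = n`. -/
def d4 (n : ℕ) : ℕ :=
  ((Finset.Icc 1 n ×ˢ Finset.Icc 1 n ×ˢ Finset.Icc 1 n ×ˢ Finset.Icc 1 n).filter
    (fun p => p.1 * p.2.1 * p.2.2.1 * p.2.2.2 = n)).card

/-- Summatory function `S(x) = ∑_{n ≤ x} a(n)`. -/
noncomputable def Ssum (a : ℕ → ℝ) (x : ℝ) : ℝ := ∑ n ∈ Finset.Icc 1 ⌊x⌋₊, a n

/-- Linear growth is dominated by exponential growth. -/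
lemma lin_le_pow {r : ℝ} (hr : 1 < r) : ∃ Cb : ℝ, 1 ≤ Cb ∧ ∀ m : ℕ, (m + 1 : ℝ) ≤ Cb * r ^ m := by
  refine ⟨max 1 (1 / (r - 1)), le_max_left _ _, fun m => ?_⟩
  have ht : 0 < r - 1 := by linarith
  have h1 : 1 + (m : ℝ) * (r - 1) ≤ r ^ m := by
    have := one_add_mul_le_pow (by linarith : (-2:ℝ) ≤ r - 1) m
    simpa using this
  have hC1 : (1:ℝ) ≤ max 1 (1 / (r - 1)) := le_max_left _ _
  have hC2' : 1 ≤ max 1 (1 / (r - 1)) * (r - 1) := by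
    have hC2 : 1 / (r - 1) ≤ max 1 (1 / (r - 1)) := le_max_right _ _
    rw [div_le_iff₀ ht] at hC2
    linarith
  have hm : (0:ℝ) ≤ (m : ℝ) := Nat.cast_nonneg m
  have h2 : (m + 1 : ℝ) ≤ max 1 (1 / (r - 1)) * (1 + (m : ℝ) * (r - 1)) := by nlinarith
  calc (m + 1 : ℝ) ≤ max 1 (1 / (r - 1)) * (1 + (m : ℝ) * (r - 1)) := h2
    _ ≤ max 1 (1 / (r - 1)) * r ^ m := mul_le_mul_of_nonneg_left h1 (by linarith)

/-- Divisor bound: `d(n) ≪_ε n^ε`. -/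
lemma card_divisors_le_rpow (ε : ℝ) (hε : 0 < ε) :
    ∃ K : ℝ, 1 ≤ K ∧ ∀ n : ℕ, n ≠ 0 → ((n.divisors.card : ℝ)) ≤ K * (n : ℝ) ^ ε := by
  have h2ε : (1:ℝ) < (2:ℝ) ^ ε := by
    have := (Real.rpow_lt_rpow_left_iff (by norm_num : (1:ℝ) < 2)).2 hε
    rwa [Real.rpow_zero] at this
  obtain ⟨Cb, hCb1, hCb⟩ := lin_le_pow h2ε
  set B : ℕ := ⌈(2:ℝ) ^ (1/ε)⌉₊ with hB
  have hB2 : ∀ p : ℕ, B ≤ p → (2:ℝ) ≤ (p : ℝ) ^ ε := by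
    intro p hp
    have h1 : (2:ℝ) ^ (1/ε) ≤ (p : ℝ) := le_trans (Nat.le_ceil _) (by exact_mod_cast hp)
    have h2 : ((2:ℝ) ^ (1/ε)) ^ ε ≤ (p : ℝ) ^ ε :=
      Real.rpow_le_rpow (Real.rpow_nonneg (by norm_num) _) h1 hε.le
    rwa [← Real.rpow_mul (by norm_num : (0:ℝ) ≤ 2), one_div_mul_cancel hε.ne',
      Real.rpow_one] at h2
  have hCb0 : (0:ℝ) < Cb := lt_of_lt_of_le one_pos hCb1
  refine ⟨Cb ^ B, one_le_pow₀ hCb1, fun n hn => ?_⟩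
  -- per prime bound
  have key : ∀ p ∈ n.primeFactors,
      ((n.factorization p : ℝ) + 1) ≤
        (if p < B then Cb else 1) * (((p : ℝ) ^ (n.factorization p)) ^ ε) := by
    intro p hp
    have hprime : p.Prime := Nat.prime_of_mem_primeFactors hp
    have hp2 : (2:ℝ) ≤ (p : ℝ) := by exact_mod_cast hprime.two_le
    set m := n.factorization p with hm
    have hpow : (((p:ℝ) ^ ε) ^ m) = ((p : ℝ) ^ m) ^ ε := by
      rw [← Real.rpow_natCast ((p:ℝ) ^ ε) m, ← Real.rpow_natCast (p:ℝ) m,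
        ← Real.rpow_mul (by linarith), ← Real.rpow_mul (by linarith), mul_comm]
    by_cases hpB : p < B
    · simp only [hpB, if_true]
      have h1 : (m + 1 : ℝ) ≤ Cb * ((2:ℝ) ^ ε) ^ m := hCb m
      have h2 : ((2:ℝ) ^ ε) ^ m ≤ ((p:ℝ) ^ ε) ^ m := by
        apply pow_le_pow_left₀ (Real.rpow_nonneg (by norm_num) _)
        exact Real.rpow_le_rpow (by norm_num) hp2 hε.le
      calc (m + 1 : ℝ) ≤ Cb * ((2:ℝ) ^ ε) ^ m := h1
        _ ≤ Cb * ((p:ℝ) ^ ε) ^ m := mul_le_mul_of_nonneg_left h2 hCb0.le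
        _ = Cb * ((p : ℝ) ^ m) ^ ε := by rw [hpow]
    · simp only [hpB, if_false, one_mul]
      have h1 : (m + 1 : ℝ) ≤ (2:ℝ) ^ m := by
        have := Nat.lt_two_pow_self (n := m)
        exact_mod_cast Nat.succ_le_of_lt this
      have h2 : ((2:ℝ)) ^ m ≤ ((p:ℝ) ^ ε) ^ m := by
        apply pow_le_pow_left₀ (by norm_num)
        exact hB2 p (le_of_not_gt hpB)
      calc (m + 1 : ℝ) ≤ (2:ℝ) ^ m := h1
        _ ≤ ((p:ℝ) ^ ε) ^ m := h2
        _ = ((p : ℝ) ^ m) ^ ε := hpow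
  have hd : (n.divisors.card : ℝ) = ∏ p ∈ n.primeFactors, ((n.factorization p : ℝ) + 1) := by
    rw [Nat.card_divisors hn]
    push_cast
    rfl
  have hneq : (n : ℝ) = ∏ p ∈ n.primeFactors, (p : ℝ) ^ (n.factorization p) := by
    have h : ∏ p ∈ n.primeFactors, p ^ n.factorization p = n :=
      Nat.factorization_prod_pow_eq_self hn
    calc (n : ℝ) = ((∏ p ∈ n.primeFactors, p ^ n.factorization p : ℕ) : ℝ) := by rw [h]
      _ = ∏ p ∈ n.primeFactors, (p : ℝ) ^ (n.factorization p) := by push_cast; rfl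
  calc (n.divisors.card : ℝ)
      = ∏ p ∈ n.primeFactors, ((n.factorization p : ℝ) + 1) := hd
    _ ≤ ∏ p ∈ n.primeFactors,
          (if p < B then Cb else 1) * (((p : ℝ) ^ (n.factorization p)) ^ ε) := by
        apply Finset.prod_le_prod (fun p _ => by positivity) key
    _ = (∏ p ∈ n.primeFactors, (if p < B then Cb else 1)) *
          ∏ p ∈ n.primeFactors, ((p : ℝ) ^ (n.factorization p)) ^ ε := by
        rw [Finset.prod_mul_distrib]
    _ ≤ Cb ^ B * (n : ℝ) ^ ε := by
        apply mul_le_mul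
        · calc (∏ p ∈ n.primeFactors, (if p < B then Cb else 1))
              ≤ ∏ p ∈ n.primeFactors, Cb ^ (if p < B then 1 else 0) := by
                apply Finset.prod_le_prod
                · intro p _; positivity
                · intro p _
                  by_cases hpB : p < B <;> simp [hpB]
            _ = Cb ^ (∑ p ∈ n.primeFactors, if p < B then 1 else 0) := by
                rw [← Finset.prod_pow_eq_pow_sum]
            _ ≤ Cb ^ B := by
                apply pow_le_pow_right₀ hCb1
                calc (∑ p ∈ n.primeFactors, if p < B then 1 else 0)
                    = (n.primeFactors.filter (· < B)).card := by
                      rw [Finset.card_filter]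
                  _ ≤ (Finset.range B).card := by
                      apply Finset.card_le_card
                      intro p hp
                      simp only [Finset.mem_filter] at hp
                      exact Finset.mem_range.2 hp.2
                  _ = B := Finset.card_range B
        · rw [Real.finset_prod_rpow _ _ (fun p _ => by positivity), ← hneq]
        · positivity
        · positivity

/-- `d₄ n ≤ d(n)³`. -/
lemma d4_le_cube (n : ℕ) (hn : n ≠ 0) : d4 n ≤ n.divisors.card ^ 3 := by
  unfold d4
  have : (n.divisors ×ˢ n.divisors ×ˢ n.divisors).card = n.divisors.card ^ 3 := by
    simp [Finset.card_product]; ring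
  rw [← this]
  apply Finset.card_le_card_of_injOn (fun p => (p.1, p.2.1, p.2.2.1))
  · intro p hp
    simp only [Finset.mem_coe, Finset.mem_filter, Finset.mem_product] at hp
    obtain ⟨-, hprod⟩ := hp
    simp only [Finset.mem_coe, Finset.mem_product, Nat.mem_divisors]
    refine ⟨⟨⟨p.2.1 * p.2.2.1 * p.2.2.2, by rw [← hprod]; ring⟩, hn⟩,
      ⟨⟨p.1 * p.2.2.1 * p.2.2.2, by rw [← hprod]; ring⟩, hn⟩,
      ⟨⟨p.1 * p.2.1 * p.2.2.2, by rw [← hprod]; ring⟩, hn⟩⟩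
  · intro p hp q hq heq
    simp only [Finset.mem_coe, Finset.mem_filter, Finset.mem_product] at hp hq
    obtain ⟨-, hpprod⟩ := hp
    obtain ⟨-, hqprod⟩ := hq
    simp only [Prod.mk.injEq] at heq
    obtain ⟨h1, h2, h3⟩ := heq
    have hne : p.1 * p.2.1 * p.2.2.1 ≠ 0 := by
      intro h0
      rw [h0, zero_mul] at hpprod
      exact hn hpprod.symm
    have h4 : p.2.2.2 = q.2.2.2 := by
      have : p.1 * p.2.1 * p.2.2.1 * p.2.2.2 = p.1 * p.2.1 * p.2.2.1 * q.2.2.2 := by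
        rw [hpprod, h1, h2, h3] at *
        rw [← hqprod, h1, h2, h3]
      exact Nat.eq_of_mul_eq_mul_left (Nat.pos_of_ne_zero hne) this
    exact Prod.ext h1 (Prod.ext h2 (Prod.ext h3 h4))

/-- `d₄(n) ≪_ε n^ε`. -/
lemma d4_le_rpow (ε : ℝ) (hε : 0 < ε) :
    ∃ K : ℝ, 1 ≤ K ∧ ∀ n : ℕ, n ≠ 0 → ((d4 n : ℝ)) ≤ K * (n : ℝ) ^ ε := by
  obtain ⟨K, hK1, hK⟩ := card_divisors_le_rpow (ε / 3) (by positivity)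
  refine ⟨K ^ 3, one_le_pow₀ hK1, fun n hn => ?_⟩
  have h1 : (d4 n : ℝ) ≤ (n.divisors.card : ℝ) ^ 3 := by
    exact_mod_cast d4_le_cube n hn
  have h2 : ((n.divisors.card : ℝ)) ^ 3 ≤ (K * (n : ℝ) ^ (ε / 3)) ^ 3 := by
    apply pow_le_pow_left₀ (Nat.cast_nonneg _) (hK n hn)
  calc (d4 n : ℝ) ≤ (K * (n : ℝ) ^ (ε / 3)) ^ 3 := le_trans h1 h2
    _ = K ^ 3 * (n : ℝ) ^ ε := by
        rw [mul_pow, ← Real.rpow_natCast ((n:ℝ) ^ (ε/3)) 3, ← Real.rpow_mul (Nat.cast_nonneg n)]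
        norm_num
  
/-- Telescoping of the summatory function. -/
lemma Ssum_diff (a : ℕ → ℝ) {y z : ℝ} (h : ⌊y⌋₊ ≤ ⌊z⌋₊) :
    Ssum a z - Ssum a y = ∑ n ∈ Finset.Ioc ⌊y⌋₊ ⌊z⌋₊, a n := by
  unfold Ssum
  have e : ∀ m : ℕ, Finset.Icc 1 m = Finset.Ioc 0 m := fun m => Finset.Icc_add_one_left_eq_Ioc ..
  rw [e, e]
  have hdisj : Disjoint (Finset.Ioc 0 ⌊y⌋₊) (Finset.Ioc ⌊y⌋₊ ⌊z⌋₊) := by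
    rw [Finset.disjoint_left]
    intro n hn1 hn2
    simp only [Finset.mem_Ioc] at hn1 hn2
    omega
  have hunion : Finset.Ioc 0 ⌊y⌋₊ ∪ Finset.Ioc ⌊y⌋₊ ⌊z⌋₊ = Finset.Ioc 0 ⌊z⌋₊ :=
    Finset.Ioc_union_Ioc_eq_Ioc (Nat.zero_le _) h
  rw [← hunion, Finset.sum_union hdisj]
  ring

/-- Extracting many positive terms from a large sum. -/
lemma count_pos_of_sum (f : ℕ → ℝ) (T : Finset ℕ) (B σ : ℝ)
    (hb : ∀ n ∈ T, f n ≤ B) (hσ : σ ≤ ∑ n ∈ T, f n) :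
    σ ≤ ((T.filter fun n => 0 < f n).card : ℝ) * B := by
  have h1 : ∑ n ∈ T, f n
      = ∑ n ∈ T.filter (fun n => 0 < f n), f n + ∑ n ∈ T.filter (fun n => ¬ 0 < f n), f n :=
    (Finset.sum_filter_add_sum_filter_not T _ f).symm
  have h2 : ∑ n ∈ T.filter (fun n => ¬ 0 < f n), f n ≤ 0 :=
    Finset.sum_nonpos (fun n hn => le_of_not_gt (Finset.mem_filter.1 hn).2)
  have h3 : ∑ n ∈ T.filter (fun n => 0 < f n), f n
      ≤ ((T.filter fun n => 0 < f n).card : ℝ) * B := by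
    have := Finset.sum_le_card_nsmul (T.filter fun n => 0 < f n) f B
      (fun n hn => hb n (Finset.mem_filter.1 hn).1)
    rwa [nsmul_eq_mul] at this
  linarith

theorem stmt2 (a : ℕ → ℝ) (c C X₀ : ℝ) (hc : 0 < c) (hC : 0 < C)
    (hbound : ∀ n : ℕ, |a n| ≤ (d4 n : ℝ))
    (hosc : ∀ X ≥ X₀,
      ∃ x₁ ∈ Set.Icc X (X + C * X ^ ((3:ℝ)/4)),
      ∃ x₂ ∈ Set.Icc X (X + C * X ^ ((3:ℝ)/4)),
        Ssum a x₁ > c * X ^ ((3:ℝ)/8) ∧ Ssum a x₂ < -c * X ^ ((3:ℝ)/8)) :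
    ∀ ε > (0:ℝ), ∃ c' > (0:ℝ), ∃ x₀ : ℝ, ∀ x ≥ x₀,
      c' * x ^ ((3:ℝ)/8 - ε) ≤
        (((Finset.Ioc ⌊x⌋₊ ⌊x + 3 * C * x ^ ((3:ℝ)/4)⌋₊).filter (fun n => 0 < a n)).card : ℝ) ∧
      c' * x ^ ((3:ℝ)/8 - ε) ≤
        (((Finset.Ioc ⌊x⌋₊ ⌊x + 3 * C * x ^ ((3:ℝ)/4)⌋₊).filter (fun n => a n < 0)).card : ℝ) := by
  intro ε hε
  obtain ⟨K, hK1, hK⟩ := d4_le_rpow ε hε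
  have hK0 : (0:ℝ) < K := lt_of_lt_of_le one_pos hK1
  have h4ε : (0:ℝ) < (4:ℝ) ^ ε := Real.rpow_pos_of_pos (by norm_num) ε
  refine ⟨c / (K * (4:ℝ) ^ ε), by positivity, max (max X₀ 1) (C ^ 4), fun x hx => ?_⟩
  set c' := c / (K * (4:ℝ) ^ ε) with hc'def
  have hx1 : (1:ℝ) ≤ x := le_trans (le_trans (le_max_right X₀ 1) (le_max_left _ _)) hx
  have hx0 : (0:ℝ) < x := by linarith
  have hxX0 : X₀ ≤ x := le_trans (le_trans (le_max_left X₀ 1) (le_max_left _ _)) hx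
  have hxC4 : C ^ 4 ≤ x := le_trans (le_max_right _ _) hx
  have hP0 : (0:ℝ) < x ^ ((3:ℝ)/4) := Real.rpow_pos_of_pos hx0 _
  -- C * x^{3/4} ≤ x
  have hCP_le : C * x ^ ((3:ℝ)/4) ≤ x := by
    have h1 : C ≤ x ^ ((1:ℝ)/4) := by
      have h2 := Real.rpow_le_rpow (by positivity) hxC4 (by norm_num : (0:ℝ) ≤ 1/4)
      rwa [← Real.rpow_natCast C 4, ← Real.rpow_mul hC.le, show ((4:ℕ):ℝ) * (1/4) = 1 by
        norm_num, Real.rpow_one] at h2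
    calc C * x ^ ((3:ℝ)/4) ≤ x ^ ((1:ℝ)/4) * x ^ ((3:ℝ)/4) :=
          mul_le_mul_of_nonneg_right h1 hP0.le
      _ = x := by rw [← Real.rpow_add hx0]; norm_num
  set X2 := x + C * x ^ ((3:ℝ)/4) with hX2def
  have hX2x : x ≤ X2 := le_add_of_nonneg_right (by positivity)
  have hX20 : (0:ℝ) < X2 := lt_of_lt_of_le hx0 hX2x
  obtain ⟨u, hu, v, hv, hSu, hSv⟩ := hosc x hxX0
  obtain ⟨u', hu', v', hv', hSu', hSv'⟩ := hosc X2 (le_trans hxX0 hX2x)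
  -- upper end of the second interval
  set U := x + 3 * C * x ^ ((3:ℝ)/4) with hUdef
  have hX2le : X2 + C * X2 ^ ((3:ℝ)/4) ≤ U := by
    have h2x : X2 ≤ 2 * x := by rw [hX2def]; linarith
    have h1 : X2 ^ ((3:ℝ)/4) ≤ (2 * x) ^ ((3:ℝ)/4) :=
      Real.rpow_le_rpow hX20.le h2x (by norm_num)
    have h2 : (2 * x) ^ ((3:ℝ)/4) = (2:ℝ) ^ ((3:ℝ)/4) * x ^ ((3:ℝ)/4) :=
      Real.mul_rpow (by norm_num) hx0.le
    have h3 : (2:ℝ) ^ ((3:ℝ)/4) ≤ 2 := by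
      calc (2:ℝ) ^ ((3:ℝ)/4) ≤ (2:ℝ) ^ (1:ℝ) :=
            Real.rpow_le_rpow_of_exponent_le one_le_two (by norm_num)
        _ = 2 := Real.rpow_one 2
    have h4 : C * X2 ^ ((3:ℝ)/4) ≤ C * (2 * x ^ ((3:ℝ)/4)) := by
      apply mul_le_mul_of_nonneg_left _ hC.le
      calc X2 ^ ((3:ℝ)/4) ≤ (2:ℝ) ^ ((3:ℝ)/4) * x ^ ((3:ℝ)/4) := by rw [← h2]; exact h1
        _ ≤ 2 * x ^ ((3:ℝ)/4) := mul_le_mul_of_nonneg_right h3 hP0.le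
    rw [hUdef, hX2def]; nlinarith
  have hU4x : U ≤ 4 * x := by rw [hUdef]; nlinarith
  -- normalize oscillation bounds at X2 down to x
  have hmono : c * x ^ ((3:ℝ)/8) ≤ c * X2 ^ ((3:ℝ)/8) :=
    mul_le_mul_of_nonneg_left (Real.rpow_le_rpow hx0.le hX2x (by norm_num)) hc.le
  -- the uniform bound on |a n| in the interval
  set B := K * (4 * x) ^ ε with hBdef
  have hBpos : (0:ℝ) < B := by rw [hBdef]; positivity
  have habs : ∀ n : ℕ, n ≠ 0 → (n : ℝ) ≤ 4 * x → |a n| ≤ B := by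
    intro n hn hle
    calc |a n| ≤ (d4 n : ℝ) := hbound n
      _ ≤ K * (n : ℝ) ^ ε := hK n hn
      _ ≤ B := by
          rw [hBdef]
          apply mul_le_mul_of_nonneg_left _ hK0.le
          exact Real.rpow_le_rpow (Nat.cast_nonneg n) hle hε.le
  -- membership bound helper
  have hmem_bound : ∀ (w z : ℝ), z ≤ U → ∀ n ∈ Finset.Ioc ⌊w⌋₊ ⌊z⌋₊, n ≠ 0 ∧ (n : ℝ) ≤ 4 * x := by
    intro w z hz n hn
    rw [Finset.mem_Ioc] at hn
    constructor
    · omega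
    · have h1 : (n : ℝ) ≤ (⌊z⌋₊ : ℝ) := Nat.cast_le.2 hn.2
      have h2 : (⌊z⌋₊ : ℝ) ≤ 4 * x := by
        by_cases hz0 : 0 ≤ z
        · exact le_trans (Nat.floor_le hz0) (le_trans hz hU4x)
        · rw [Nat.floor_of_nonpos (le_of_not_ge hz0)]; push_cast; linarith
      linarith
  -- key algebraic step
  have hkey : c' * x ^ ((3:ℝ)/8 - ε) * B = c * x ^ ((3:ℝ)/8) := by
    have h38 : x ^ ((3:ℝ)/8 - ε) * x ^ ε = x ^ ((3:ℝ)/8) := by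
      rw [← Real.rpow_add hx0]; norm_num
    rw [hBdef, Real.mul_rpow (by norm_num : (0:ℝ) ≤ 4) hx0.le]
    calc c' * x ^ ((3:ℝ)/8 - ε) * (K * ((4:ℝ) ^ ε * x ^ ε))
        = (c' * (K * (4:ℝ) ^ ε)) * (x ^ ((3:ℝ)/8 - ε) * x ^ ε) := by ring
      _ = c * x ^ ((3:ℝ)/8) := by
          rw [h38, hc'def, div_mul_cancel₀ c (by positivity)]
  have hx38pos : (0:ℝ) < c * x ^ ((3:ℝ)/8) := by positivity
  -- common final step
  have hfinal : ∀ (T S : Finset ℕ), T ⊆ S → 2 * (c * x ^ ((3:ℝ)/8)) ≤ (T.card : ℝ) * B →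
      c' * x ^ ((3:ℝ)/8 - ε) ≤ (S.card : ℝ) := by
    intro T S hTS hT
    rw [← mul_le_mul_iff_of_pos_right hBpos, hkey]
    calc c * x ^ ((3:ℝ)/8) ≤ 2 * (c * x ^ ((3:ℝ)/8)) := by linarith
      _ ≤ (T.card : ℝ) * B := hT
      _ ≤ (S.card : ℝ) * B := by
          apply mul_le_mul_of_nonneg_right _ hBpos.le
          exact_mod_cast Finset.card_le_card hTS
  constructor
  · -- positive terms: jump from v up to u'
    have hvu' : v ≤ u' := le_trans hv.2 hu'.1
    have hf : ⌊v⌋₊ ≤ ⌊u'⌋₊ := Nat.floor_le_floor hvu'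
    have hsum : 2 * (c * x ^ ((3:ℝ)/8)) ≤ ∑ n ∈ Finset.Ioc ⌊v⌋₊ ⌊u'⌋₊, a n := by
      rw [← Ssum_diff a hf]
      linarith [hSu', hSv, hmono]
    have hu'U : u' ≤ U := le_trans hu'.2 hX2le
    have hcount := count_pos_of_sum a (Finset.Ioc ⌊v⌋₊ ⌊u'⌋₊) B (2 * (c * x ^ ((3:ℝ)/8)))
      (fun n hn => by
        obtain ⟨hn0, hn4x⟩ := hmem_bound v u' hu'U n hn
        exact le_trans (le_abs_self _) (habs n hn0 hn4x)) hsum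
    apply hfinal _ _ _ hcount
    apply Finset.filter_subset_filter
    apply Finset.Ioc_subset_Ioc (Nat.floor_le_floor hv.1) (Nat.floor_le_floor hu'U)
  · -- negative terms: jump from u down to v'
    have huv' : u ≤ v' := le_trans hu.2 hv'.1
    have hf : ⌊u⌋₊ ≤ ⌊v'⌋₊ := Nat.floor_le_floor huv'
    have hsum : 2 * (c * x ^ ((3:ℝ)/8)) ≤ ∑ n ∈ Finset.Ioc ⌊u⌋₊ ⌊v'⌋₊, -a n := by
      rw [Finset.sum_neg_distrib, ← Ssum_diff a hf]
      linarith [hmono, hSu, hSv']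
    have hv'U : v' ≤ U := le_trans hv'.2 hX2le
    have hcount := count_pos_of_sum (fun n => -a n) (Finset.Ioc ⌊u⌋₊ ⌊v'⌋₊) B
      (2 * (c * x ^ ((3:ℝ)/8)))
      (fun n hn => by
        obtain ⟨hn0, hn4x⟩ := hmem_bound u v' hv'U n hn
        exact le_trans (neg_le_abs _) (habs n hn0 hn4x)) hsum
    have hconv : (Finset.Ioc ⌊u⌋₊ ⌊v'⌋₊).filter (fun n => 0 < -a n)
        = (Finset.Ioc ⌊u⌋₊ ⌊v'⌋₊).filter (fun n => a n < 0) := by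
      apply Finset.filter_congr
      intro n _
      simp [neg_pos]
    rw [hconv] at hcount
    apply hfinal _ _ _ hcount
    apply Finset.filter_subset_filter
    apply Finset.Ioc_subset_Ioc (Nat.floor_le_floor hu.1) (Nat.floor_le_floor hv'U)
end

section
/- Suppose the partial sums S(x) = Σ_{n ≤ x} a(n) of a real arithmetic function satisfy S(x) ≪ x^{3/5+ε} for all ε > 0. Then for any fixed β > 0, the series Σ_{n≥1} (a(n)/n^{7/8})·sin(4√(2π)·n^{1/4}·v + π/4) converges uniformly for v in any compact subset of (0, ∞). -/
open Real Filter Topology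

private lemma stmt10_rpow_diff (p : ℝ) (hp : p ≤ 1) (n : ℕ) (hn : 1 ≤ n) :
    |((n : ℝ) + 1) ^ p - (n : ℝ) ^ p| ≤ |p| * (n : ℝ) ^ (p - 1) := by
  have hn0 : (0 : ℝ) < n := by exact_mod_cast hn
  have hderiv : ∀ x ∈ Set.Icc (n : ℝ) ((n : ℝ) + 1),
      HasDerivWithinAt (fun y : ℝ => y ^ p) (p * x ^ (p - 1))
        (Set.Icc (n : ℝ) ((n : ℝ) + 1)) x := by
    intro x hx
    exact (Real.hasDerivAt_rpow_const
      (Or.inl (ne_of_gt (lt_of_lt_of_le hn0 hx.1)))).hasDerivWithinAt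
  have hbound : ∀ x ∈ Set.Icc (n : ℝ) ((n : ℝ) + 1),
      ‖p * x ^ (p - 1)‖ ≤ |p| * (n : ℝ) ^ (p - 1) := by
    intro x hx
    rw [norm_mul, Real.norm_eq_abs, Real.norm_eq_abs,
      abs_of_nonneg (Real.rpow_nonneg (le_trans hn0.le hx.1) _)]
    exact mul_le_mul_of_nonneg_left
      (Real.rpow_le_rpow_of_nonpos hn0 hx.1 (by linarith)) (abs_nonneg p)
  have key := (convex_Icc (n : ℝ) ((n : ℝ) + 1)).norm_image_sub_le_of_norm_hasDerivWithin_le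
    hderiv hbound (Set.left_mem_Icc.2 (by linarith)) (Set.right_mem_Icc.2 (by linarith))
  simpa using key

private lemma stmt10_abel (b : ℕ → ℝ) (φ : ℕ → ℝ) (M : ℕ) :
    ∀ N, M ≤ N →
      ∑ n ∈ Finset.Ioc M N, b n * φ n
        = (∑ i ∈ Finset.Ioc 0 N, b i) * φ (N + 1)
          - (∑ i ∈ Finset.Ioc 0 M, b i) * φ (M + 1)
          + ∑ n ∈ Finset.Ioc M N, (∑ i ∈ Finset.Ioc 0 n, b i) * (φ n - φ (n + 1)) := by
  intro N hN
  induction N, hN using Nat.le_induction with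
  | base => simp
  | succ N hMN ih =>
      rw [Finset.sum_Ioc_succ_top hMN, Finset.sum_Ioc_succ_top hMN, ih,
        Finset.sum_Ioc_succ_top (Nat.zero_le N)]
      ring

private lemma stmt10_sin_lip (x y : ℝ) : |Real.sin x - Real.sin y| ≤ |x - y| := by
  rw [Real.sin_sub_sin, abs_mul, abs_mul]
  have h1 : |Real.sin ((x - y) / 2)| ≤ |(x - y) / 2| := Real.abs_sin_le_abs
  have h2 : |Real.cos ((x + y) / 2)| ≤ 1 := Real.abs_cos_le_one _
  have h3 : |(2 : ℝ)| = 2 := by norm_num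
  calc |(2:ℝ)| * |Real.sin ((x - y) / 2)| * |Real.cos ((x + y) / 2)|
      ≤ |(2:ℝ)| * |(x - y) / 2| * 1 := by
        apply mul_le_mul (mul_le_mul_of_nonneg_left h1 (abs_nonneg _)) h2
          (abs_nonneg _) (by positivity)
    _ = |x - y| := by rw [h3, abs_div]; rw [abs_two]; ring

theorem stmt10 (a : ℕ → ℝ)
    (hS : ∀ ε > (0:ℝ), ∃ K : ℝ, ∀ x : ℝ, 2 ≤ x →
      |∑ n ∈ Finset.Icc 1 ⌊x⌋₊, a n| ≤ K * x ^ ((3:ℝ)/5 + ε)) :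
    ∀ s : Set ℝ, IsCompact s → s ⊆ Set.Ioi (0:ℝ) →
      ∃ g : ℝ → ℝ, TendstoUniformlyOn
        (fun (N : ℕ) (v : ℝ) => ∑ n ∈ Finset.Icc 1 N,
          a n / (n : ℝ) ^ ((7:ℝ)/8) *
            Real.sin (4 * Real.sqrt (2 * π) * (n : ℝ) ^ ((1:ℝ)/4) * v + π / 4))
        g atTop s := by
  intro s hs _hspos
  set F : ℕ → ℝ → ℝ := fun (N : ℕ) (v : ℝ) => ∑ n ∈ Finset.Icc 1 N,
      a n / (n : ℝ) ^ ((7:ℝ)/8) *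
        Real.sin (4 * Real.sqrt (2 * π) * (n : ℝ) ^ ((1:ℝ)/4) * v + π / 4) with hFdef
  -- bound on the compact set
  obtain ⟨R, hR⟩ := (Metric.isBounded_iff_subset_closedBall 0).1 hs.isBounded
  set V : ℝ := max R 0 with hVdef
  have hV0 : 0 ≤ V := le_max_right _ _
  have hV : ∀ v ∈ s, |v| ≤ V := by
    intro v hv
    have := hR hv
    rw [Metric.mem_closedBall, Real.dist_eq, sub_zero] at this
    exact this.trans (le_max_left _ _)
  -- constants
  set c4 : ℝ := 4 * Real.sqrt (2 * π) with hc4def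
  have hc40 : 0 ≤ c4 := by positivity
  obtain ⟨K, hK⟩ := hS (1/80) (by norm_num)
  set B : ℕ → ℝ := fun n => ∑ i ∈ Finset.Ioc 0 n, a i with hBdef
  set K₁ : ℝ := max K |a 1| with hK₁def
  have hK₁0 : 0 ≤ K₁ := le_trans (abs_nonneg _) (le_max_right _ _)
  have hIccIoc : ∀ n : ℕ, Finset.Icc 1 n = Finset.Ioc 0 n := by
    intro n; ext x; simp [Nat.lt_iff_add_one_le]
  have hB : ∀ n : ℕ, 1 ≤ n → |B n| ≤ K₁ * (n : ℝ) ^ ((49:ℝ)/80) := by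
    intro n hn
    rcases eq_or_lt_of_le hn with h1 | h2
    · rw [hBdef]
      simp only [← h1]
      have : Finset.Ioc 0 1 = {1} := rfl
      rw [this, Finset.sum_singleton]
      simp only [Nat.cast_one, Real.one_rpow, mul_one]
      exact le_max_right K |a 1|
    · have hn2 : (2 : ℝ) ≤ (n : ℝ) := by exact_mod_cast h2
      have := hK (n : ℝ) hn2
      rw [Nat.floor_natCast, hIccIoc] at this
      have he : (3:ℝ)/5 + 1/80 = 49/80 := by norm_num
      rw [he] at this
      refine this.trans (mul_le_mul_of_nonneg_right (le_max_left _ _)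
        (Real.rpow_nonneg (Nat.cast_nonneg n) _))
  -- the oscillating factor
  set θ : ℕ → ℝ → ℝ := fun n v => c4 * (n : ℝ) ^ ((1:ℝ)/4) * v + π / 4 with hθdef
  set φ : ℕ → ℝ → ℝ := fun n v =>
    Real.sin (θ n v) * (n : ℝ) ^ (-((7:ℝ)/8)) with hφdef
  have hFeq : ∀ (N : ℕ) (v : ℝ), F N v = ∑ n ∈ Finset.Ioc 0 N, a n * φ n v := by
    intro N v
    rw [hFdef]
    simp only
    rw [hIccIoc]
    refine Finset.sum_congr rfl fun n _ => ?_
    simp only [hφdef, hθdef]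
    rw [Real.rpow_neg (Nat.cast_nonneg n), div_eq_mul_inv, hc4def]
    ring
  have hφabs : ∀ (n : ℕ) (v : ℝ), |φ n v| ≤ (n : ℝ) ^ (-((7:ℝ)/8)) := by
    intro n v
    simp only [hφdef, abs_mul]
    rw [abs_of_nonneg (Real.rpow_nonneg (Nat.cast_nonneg n) _)]
    exact mul_le_of_le_one_left (Real.rpow_nonneg (Nat.cast_nonneg n) _)
      (Real.abs_sin_le_one _)
  -- difference bound for the oscillating factor
  set C : ℝ := 1 + c4 * V with hCdef
  have hC0 : 0 ≤ C := by rw [hCdef]; positivity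
  have hφdiff : ∀ v : ℝ, |v| ≤ V → ∀ n : ℕ, 1 ≤ n →
      |φ n v - φ (n + 1) v| ≤ C * (n : ℝ) ^ (-((13:ℝ)/8)) := by
    intro v hvV n hn
    have hn0 : (0:ℝ) < n := by exact_mod_cast hn
    have hn1 : (1:ℝ) ≤ n := by exact_mod_cast hn
    have hcast : ((n + 1 : ℕ) : ℝ) = (n : ℝ) + 1 := by push_cast; ring
    have hu2 : ((n + 1 : ℕ) : ℝ) ^ (-((7:ℝ)/8)) ≤ (n : ℝ) ^ (-((7:ℝ)/8)) := by
      rw [hcast]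
      exact Real.rpow_le_rpow_of_nonpos hn0 (by linarith) (by norm_num)
    have hu2nn : (0:ℝ) ≤ ((n + 1 : ℕ) : ℝ) ^ (-((7:ℝ)/8)) :=
      Real.rpow_nonneg (Nat.cast_nonneg _) _
    have hu1 : |(n:ℝ) ^ (-((7:ℝ)/8)) - ((n + 1 : ℕ):ℝ) ^ (-((7:ℝ)/8))|
        ≤ (n:ℝ) ^ (-((13:ℝ)/8)) := by
      rw [hcast, abs_sub_comm]
      have h := stmt10_rpow_diff (-((7:ℝ)/8)) (by norm_num) n hn
      have he : (-((7:ℝ)/8) - 1) = (-((15:ℝ)/8)) := by norm_num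
      rw [he] at h
      refine h.trans ?_
      have h158 : (n:ℝ) ^ (-((15:ℝ)/8)) ≤ (n:ℝ) ^ (-((13:ℝ)/8)) :=
        Real.rpow_le_rpow_of_exponent_le hn1 (by norm_num)
      calc |(-((7:ℝ)/8))| * (n:ℝ) ^ (-((15:ℝ)/8))
          ≤ 1 * (n:ℝ) ^ (-((15:ℝ)/8)) := by
            apply mul_le_mul_of_nonneg_right _ (Real.rpow_nonneg hn0.le _)
            rw [abs_of_nonpos (by norm_num : -((7:ℝ)/8) ≤ 0)]; norm_num
        _ ≤ (n:ℝ) ^ (-((13:ℝ)/8)) := by rw [one_mul]; exact h158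
    have hθdiff : |θ n v - θ (n + 1) v| ≤ c4 * V * (n:ℝ) ^ (-((3:ℝ)/4)) := by
      have h4 : |((n:ℝ) + 1) ^ ((1:ℝ)/4) - (n:ℝ) ^ ((1:ℝ)/4)| ≤ (n:ℝ) ^ (-((3:ℝ)/4)) := by
        have h := stmt10_rpow_diff ((1:ℝ)/4) (by norm_num) n hn
        have he : ((1:ℝ)/4 - 1) = (-((3:ℝ)/4)) := by norm_num
        rw [he] at h
        refine h.trans ?_
        calc |(1:ℝ)/4| * (n:ℝ) ^ (-((3:ℝ)/4))
            ≤ 1 * (n:ℝ) ^ (-((3:ℝ)/4)) := by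
              apply mul_le_mul_of_nonneg_right _ (Real.rpow_nonneg hn0.le _)
              rw [abs_of_nonneg (by norm_num : (0:ℝ) ≤ 1/4)]; norm_num
          _ = (n:ℝ) ^ (-((3:ℝ)/4)) := one_mul _
      have heq : θ n v - θ (n + 1) v
          = c4 * v * ((n:ℝ) ^ ((1:ℝ)/4) - ((n:ℝ) + 1) ^ ((1:ℝ)/4)) := by
        simp only [hθdef, hcast]; ring
      rw [heq, abs_mul, abs_mul, abs_of_nonneg hc40, abs_sub_comm]
      exact mul_le_mul (mul_le_mul_of_nonneg_left hvV hc40) h4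
        (abs_nonneg _) (by positivity)
    have hsplit : φ n v - φ (n + 1) v
        = Real.sin (θ n v) * ((n:ℝ) ^ (-((7:ℝ)/8)) - ((n + 1 : ℕ):ℝ) ^ (-((7:ℝ)/8)))
          + (Real.sin (θ n v) - Real.sin (θ (n + 1) v)) * ((n + 1 : ℕ):ℝ) ^ (-((7:ℝ)/8)) := by
      simp only [hφdef]; ring
    rw [hsplit]
    have t1 : |Real.sin (θ n v) * ((n:ℝ) ^ (-((7:ℝ)/8)) - ((n + 1 : ℕ):ℝ) ^ (-((7:ℝ)/8)))|
        ≤ (n:ℝ) ^ (-((13:ℝ)/8)) := by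
      rw [abs_mul]
      calc |Real.sin (θ n v)| * |(n:ℝ) ^ (-((7:ℝ)/8)) - ((n + 1 : ℕ):ℝ) ^ (-((7:ℝ)/8))|
          ≤ 1 * ((n:ℝ) ^ (-((13:ℝ)/8))) :=
            mul_le_mul (Real.abs_sin_le_one _) hu1 (abs_nonneg _) zero_le_one
        _ = (n:ℝ) ^ (-((13:ℝ)/8)) := one_mul _
    have t2 : |(Real.sin (θ n v) - Real.sin (θ (n + 1) v)) * ((n + 1 : ℕ):ℝ) ^ (-((7:ℝ)/8))|
        ≤ (c4 * V) * (n:ℝ) ^ (-((13:ℝ)/8)) := by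
      rw [abs_mul, abs_of_nonneg hu2nn]
      calc |Real.sin (θ n v) - Real.sin (θ (n + 1) v)| * ((n + 1 : ℕ):ℝ) ^ (-((7:ℝ)/8))
          ≤ (c4 * V * (n:ℝ) ^ (-((3:ℝ)/4))) * ((n:ℝ) ^ (-((7:ℝ)/8))) := by
            apply mul_le_mul ((stmt10_sin_lip _ _).trans hθdiff) hu2 hu2nn (by positivity)
        _ = (c4 * V) * (n:ℝ) ^ (-((13:ℝ)/8)) := by
            rw [mul_assoc, ← Real.rpow_add hn0]; norm_num
    calc |Real.sin (θ n v) * ((n:ℝ) ^ (-((7:ℝ)/8)) - ((n + 1 : ℕ):ℝ) ^ (-((7:ℝ)/8)))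
          + (Real.sin (θ n v) - Real.sin (θ (n + 1) v)) * ((n + 1 : ℕ):ℝ) ^ (-((7:ℝ)/8))|
        ≤ |Real.sin (θ n v) * ((n:ℝ) ^ (-((7:ℝ)/8)) - ((n + 1 : ℕ):ℝ) ^ (-((7:ℝ)/8)))|
          + |(Real.sin (θ n v) - Real.sin (θ (n + 1) v)) * ((n + 1 : ℕ):ℝ) ^ (-((7:ℝ)/8))| :=
          abs_add_le _ _
      _ ≤ (n:ℝ) ^ (-((13:ℝ)/8)) + (c4 * V) * (n:ℝ) ^ (-((13:ℝ)/8)) := add_le_add t1 t2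
      _ = C * (n:ℝ) ^ (-((13:ℝ)/8)) := by rw [hCdef]; ring
  -- tail of the dominating series
  set w : ℕ → ℝ := fun n => (n:ℝ) ^ (-((81:ℝ)/80)) with hwdef
  have hw : Summable w := Real.summable_nat_rpow.mpr (by norm_num)
  set T : ℕ → ℝ := fun M => ∑' k, w (k + (M + 1)) with hTdef
  have hTtend : Tendsto T atTop (𝓝 0) := (tendsto_sum_nat_add w).comp (tendsto_add_atTop_nat 1)
  have hTle : ∀ M N : ℕ, M ≤ N → ∑ n ∈ Finset.Ioc M N, w n ≤ T M := by
    intro M N hMN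
    have hIoc : Finset.Ioc M N = Finset.Ico (M + 1) (N + 1) := by
      ext x; simp only [Finset.mem_Ioc, Finset.mem_Ico]; omega
    rw [hIoc, Finset.sum_Ico_eq_sum_range]
    have hsum : Summable (fun k => w (k + (M + 1))) := (summable_nat_add_iff (M + 1)).mpr hw
    refine le_trans (le_of_eq (Finset.sum_congr rfl fun i _ => by rw [add_comm])) ?_
    exact Summable.sum_le_tsum (Finset.range (N + 1 - (M + 1)))
      (fun i _ => Real.rpow_nonneg (Nat.cast_nonneg _) _) hsum
  -- boundary decay
  set D : ℕ → ℝ := fun M => (M:ℝ) ^ (-((21:ℝ)/80)) with hDdef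
  have hDtend : Tendsto D atTop (𝓝 0) := by
    have h := (tendsto_rpow_neg_atTop (by norm_num : (0:ℝ) < 21/80)).comp
      (tendsto_natCast_atTop_atTop (R := ℝ))
    have he : D = (fun x : ℝ => x ^ (-((21:ℝ)/80))) ∘ (Nat.cast : ℕ → ℝ) := by
      funext M; simp [hDdef]
    rw [he]
    exact h
  set E : ℕ → ℝ := fun M => K₁ * D M + K₁ * D M + K₁ * C * T M with hEdef
  have hEtend : Tendsto E atTop (𝓝 0) := by
    have h1 := hDtend.const_mul K₁
    have h2 := hTtend.const_mul (K₁ * C)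
    have h3 := (h1.add h1).add h2
    simp only [hEdef]
    simpa using h3
  -- main estimate
  have hmain : ∀ v : ℝ, |v| ≤ V → ∀ M N : ℕ, 1 ≤ M → M ≤ N →
      |F N v - F M v| ≤ E M := by
    intro v hvV M N hM1 hMN
    have hM0 : (0:ℝ) < M := by exact_mod_cast hM1
    have hsub : F N v - F M v = ∑ n ∈ Finset.Ioc M N, a n * φ n v := by
      rw [hFeq, hFeq,
        ← Finset.sum_Ioc_consecutive (fun n => a n * φ n v) (Nat.zero_le M) hMN]
      ring
    have habel := stmt10_abel a (fun k => φ k v) M N hMN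
    rw [hsub, habel]
    have hφle : ∀ k : ℕ, 1 ≤ k → |φ (k + 1) v| ≤ (k:ℝ) ^ (-((7:ℝ)/8)) := by
      intro k hk
      have hk0 : (0:ℝ) < k := by exact_mod_cast hk
      refine (hφabs (k + 1) v).trans ?_
      have hc : ((k + 1 : ℕ):ℝ) = (k:ℝ) + 1 := by push_cast; ring
      rw [hc]
      exact Real.rpow_le_rpow_of_nonpos hk0 (by linarith) (by norm_num)
    have hBφ : ∀ k : ℕ, M ≤ k → |B k| * (k:ℝ) ^ (-((7:ℝ)/8)) ≤ K₁ * D M := by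
      intro k hk
      have hk1 : 1 ≤ k := le_trans hM1 hk
      have hk0 : (0:ℝ) < k := by exact_mod_cast hk1
      calc |B k| * (k:ℝ) ^ (-((7:ℝ)/8))
          ≤ (K₁ * (k:ℝ) ^ ((49:ℝ)/80)) * (k:ℝ) ^ (-((7:ℝ)/8)) :=
            mul_le_mul_of_nonneg_right (hB k hk1) (Real.rpow_nonneg hk0.le _)
        _ = K₁ * (k:ℝ) ^ (-((21:ℝ)/80)) := by
            rw [mul_assoc, ← Real.rpow_add hk0]; norm_num
        _ ≤ K₁ * (M:ℝ) ^ (-((21:ℝ)/80)) := by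
            apply mul_le_mul_of_nonneg_left _ hK₁0
            exact Real.rpow_le_rpow_of_nonpos hM0 (by exact_mod_cast hk) (by norm_num)
        _ = K₁ * D M := by rw [hDdef]
    have t1 : |(∑ i ∈ Finset.Ioc 0 N, a i) * φ (N + 1) v| ≤ K₁ * D M := by
      rw [abs_mul]
      have hN1 : 1 ≤ N := le_trans hM1 hMN
      calc |∑ i ∈ Finset.Ioc 0 N, a i| * |φ (N + 1) v|
          ≤ |B N| * ((N:ℝ) ^ (-((7:ℝ)/8))) :=
            mul_le_mul_of_nonneg_left (hφle N hN1) (abs_nonneg _)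
        _ ≤ K₁ * D M := hBφ N hMN
    have t2 : |(∑ i ∈ Finset.Ioc 0 M, a i) * φ (M + 1) v| ≤ K₁ * D M := by
      rw [abs_mul]
      calc |∑ i ∈ Finset.Ioc 0 M, a i| * |φ (M + 1) v|
          ≤ |B M| * ((M:ℝ) ^ (-((7:ℝ)/8))) :=
            mul_le_mul_of_nonneg_left (hφle M hM1) (abs_nonneg _)
        _ ≤ K₁ * D M := hBφ M le_rfl
    have t3 : |∑ n ∈ Finset.Ioc M N, (∑ i ∈ Finset.Ioc 0 n, a i) * (φ n v - φ (n + 1) v)|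
        ≤ K₁ * C * T M := by
      refine (Finset.abs_sum_le_sum_abs _ _).trans ?_
      have hterm : ∀ n ∈ Finset.Ioc M N,
          |(∑ i ∈ Finset.Ioc 0 n, a i) * (φ n v - φ (n + 1) v)| ≤ (K₁ * C) * w n := by
        intro n hn
        have hn1 : 1 ≤ n := le_trans hM1 (Finset.mem_Ioc.1 hn).1.le
        have hn0 : (0:ℝ) < n := by exact_mod_cast hn1
        rw [abs_mul]
        calc |∑ i ∈ Finset.Ioc 0 n, a i| * |φ n v - φ (n + 1) v|
            ≤ (K₁ * (n:ℝ) ^ ((49:ℝ)/80)) * (C * (n:ℝ) ^ (-((13:ℝ)/8))) :=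
              mul_le_mul (hB n hn1) (hφdiff v hvV n hn1) (abs_nonneg _)
                (by positivity)
          _ = (K₁ * C) * w n := by
              rw [hwdef, mul_mul_mul_comm, ← Real.rpow_add hn0]; norm_num
      refine (Finset.sum_le_sum hterm).trans ?_
      rw [← Finset.mul_sum]
      have := hTle M N hMN
      calc (K₁ * C) * ∑ n ∈ Finset.Ioc M N, w n
          ≤ (K₁ * C) * T M :=
            mul_le_mul_of_nonneg_left this (mul_nonneg hK₁0 hC0)
        _ = K₁ * C * T M := rfl
    calc |(∑ i ∈ Finset.Ioc 0 N, a i) * φ (N + 1) v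
          - (∑ i ∈ Finset.Ioc 0 M, a i) * φ (M + 1) v
          + ∑ n ∈ Finset.Ioc M N, (∑ i ∈ Finset.Ioc 0 n, a i) * (φ n v - φ (n + 1) v)|
        ≤ |(∑ i ∈ Finset.Ioc 0 N, a i) * φ (N + 1) v
            - (∑ i ∈ Finset.Ioc 0 M, a i) * φ (M + 1) v|
          + |∑ n ∈ Finset.Ioc M N, (∑ i ∈ Finset.Ioc 0 n, a i) * (φ n v - φ (n + 1) v)| :=
          abs_add_le _ _
      _ ≤ (|(∑ i ∈ Finset.Ioc 0 N, a i) * φ (N + 1) v|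
            + |(∑ i ∈ Finset.Ioc 0 M, a i) * φ (M + 1) v|)
          + |∑ n ∈ Finset.Ioc M N, (∑ i ∈ Finset.Ioc 0 n, a i) * (φ n v - φ (n + 1) v)| :=
          add_le_add (abs_sub _ _) le_rfl
      _ ≤ (K₁ * D M + K₁ * D M) + K₁ * C * T M :=
          add_le_add (add_le_add t1 t2) t3
      _ = E M := by rw [hEdef]
  -- uniform Cauchy
  have hUC : UniformCauchySeqOn F atTop s := by
    rw [Metric.uniformCauchySeqOn_iff]
    intro ε hε
    obtain ⟨M₀, hM₀⟩ := (Metric.tendsto_atTop.mp hEtend) ε hε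
    refine ⟨max M₀ 1, fun m hm n hn v hv => ?_⟩
    have hm1 : 1 ≤ m := le_trans (le_max_right _ _) hm
    have hn1 : 1 ≤ n := le_trans (le_max_right _ _) hn
    have hEm : ∀ k, M₀ ≤ k → E k < ε := by
      intro k hk
      have h := hM₀ k hk
      rw [Real.dist_eq, sub_zero] at h
      exact lt_of_le_of_lt (le_abs_self _) h
    rcases le_total m n with h | h
    · rw [dist_comm, Real.dist_eq]
      exact lt_of_le_of_lt (hmain v (hV v hv) m n hm1 h)
        (hEm m (le_trans (le_max_left _ _) hm))
    · rw [Real.dist_eq]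
      exact lt_of_le_of_lt (hmain v (hV v hv) n m hn1 h)
        (hEm n (le_trans (le_max_left _ _) hn))
  have hconv : ∀ v ∈ s, ∃ l, Tendsto (fun N => F N v) atTop (𝓝 l) := fun v hv =>
    cauchySeq_tendsto_of_complete (hUC.cauchySeq hv)
  choose! g hg using hconv
  exact ⟨g, hUC.tendstoUniformlyOn_of_tendsto hg⟩
end
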